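/- Let μ be a probability measure on ℝ^d which is not the Dirac mass at 0, and suppose its Laplace transform L(u) = ∫ exp(uᵀx) dμ(x) is finite everywhere. Then there exist a ∈ ℝ^d, α > 0 and δ > 0 such that 0 ∉ ∏_{j=1}^d [a_j − α, a_j + α], μ(∏_j [a_j−α, a_j+α]) ≥ δ, and for all u ∈ ℝ^d, L(u) ≥ δ·exp(∑_{j=1}^d inf_{x_j ∈ [a_j−α, a_j+α]} u_j x_j). -/

import Mathlib

open MeasureTheory Real

/-- Auxiliary: given a box with nonzero measure, the Laplace lower bound holds
with `δ = μ B`. -/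
lemma laplace_box_bound (d : ℕ) (μ : Measure (EuclideanSpace ℝ (Fin d)))
    [IsProbabilityMeasure μ]
    (hint : ∀ u : EuclideanSpace ℝ (Fin d),
      Integrable (fun x => Real.exp ((inner ℝ u x : ℝ))) μ)
    (a : Fin d → ℝ) (α : ℝ)
    (hB : μ {x : EuclideanSpace ℝ (Fin d) | ∀ j, x j ∈ Set.Icc (a j - α) (a j + α)} ≠ 0) :
    ∃ δ : ℝ, 0 < δ ∧
      ENNReal.ofReal δ ≤
        μ {x : EuclideanSpace ℝ (Fin d) | ∀ j, x j ∈ Set.Icc (a j - α) (a j + α)} ∧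
      ∀ u : EuclideanSpace ℝ (Fin d),
        δ * Real.exp (∑ j, ⨅ x : Set.Icc (a j - α) (a j + α), u j * (x : ℝ)) ≤
          ∫ x, Real.exp ((inner ℝ u x : ℝ)) ∂μ := by
  set B : Set (EuclideanSpace ℝ (Fin d)) :=
    {x | ∀ j, x j ∈ Set.Icc (a j - α) (a j + α)} with hBdef
  have hBmeas : MeasurableSet B := by
    have hEq : B = ⋂ j, (fun x : EuclideanSpace ℝ (Fin d) => x j) ⁻¹'
        Set.Icc (a j - α) (a j + α) := by
      ext x; simp [hBdef]
    rw [hEq]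
    exact MeasurableSet.iInter fun j => measurableSet_Icc.preimage
      ((EuclideanSpace.proj j : EuclideanSpace ℝ (Fin d) →L[ℝ] ℝ).continuous.measurable)
  refine ⟨(μ B).toReal, ENNReal.toReal_pos hB (measure_ne_top μ B), ?_, ?_⟩
  · rw [ENNReal.ofReal_toReal (measure_ne_top μ B)]
  · intro u
    set c : ℝ := Real.exp (∑ j, ⨅ x : Set.Icc (a j - α) (a j + α), u j * (x : ℝ)) with hc
    have hbox : ∀ x ∈ B, c ≤ Real.exp ((inner ℝ u x : ℝ)) := by
      intro x hx
      rw [hc]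
      apply Real.exp_le_exp.2
      have hinner : (inner ℝ u x : ℝ) = ∑ j, u j * x j := by
        simp [PiLp.inner_apply, RCLike.inner_apply, mul_comm]
      rw [hinner]
      apply Finset.sum_le_sum
      intro j _
      have hbdd : BddBelow (Set.range fun y : Set.Icc (a j - α) (a j + α) => u j * (y : ℝ)) := by
        refine ⟨-(|u j| * (|a j| + |α|)), ?_⟩
        rintro _ ⟨⟨y, hy⟩, rfl⟩
        have h1 : |y| ≤ |a j| + |α| := by
          rcases hy with ⟨h2, h3⟩
          rw [abs_le]; constructor <;> cases abs_cases (a j) <;> cases abs_cases α <;> linarith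
        calc -(|u j| * (|a j| + |α|)) ≤ -(|u j| * |y|) := by
              have := abs_nonneg (u j); nlinarith
          _ ≤ -|u j * y| := by rw [abs_mul]
          _ ≤ u j * y := neg_abs_le _
      exact ciInf_le hbdd (⟨x j, hx j⟩ : Set.Icc (a j - α) (a j + α))
    calc (μ B).toReal * c = c * (μ B).toReal := mul_comm _ _
      _ ≤ ∫ x in B, Real.exp ((inner ℝ u x : ℝ)) ∂μ :=
          setIntegral_ge_of_const_le_real hBmeas (measure_ne_top μ B) hbox ((hint u).integrableOn)
      _ ≤ ∫ x, Real.exp ((inner ℝ u x : ℝ)) ∂μ :=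
          setIntegral_le_integral (hint u)
            (Filter.Eventually.of_forall fun x => (Real.exp_pos _).le)

/-- If `μ` is a probability measure on `ℝ^d`, not the Dirac mass at `0`, with everywhere-finite
Laplace transform, then there is a box `∏ [a_j − α, a_j + α]` not containing `0`, of `μ`-measure
at least `δ > 0`, and the Laplace transform is bounded below by
`δ * exp (∑_j inf_{x_j ∈ [a_j−α, a_j+α]} u_j x_j)` for every `u`. -/
theorem stmt4 (d : ℕ) (μ : Measure (EuclideanSpace ℝ (Fin d))) [IsProbabilityMeasure μ]
    (hμ : μ ≠ Measure.dirac 0)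
    (hint : ∀ u : EuclideanSpace ℝ (Fin d),
      Integrable (fun x => Real.exp ((inner ℝ u x : ℝ))) μ) :
    ∃ (a : Fin d → ℝ) (α δ : ℝ), 0 < α ∧ 0 < δ ∧
      (0 : EuclideanSpace ℝ (Fin d)) ∉
        {x : EuclideanSpace ℝ (Fin d) | ∀ j, x j ∈ Set.Icc (a j - α) (a j + α)} ∧
      ENNReal.ofReal δ ≤
        μ {x : EuclideanSpace ℝ (Fin d) | ∀ j, x j ∈ Set.Icc (a j - α) (a j + α)} ∧
      ∀ u : EuclideanSpace ℝ (Fin d),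
        δ * Real.exp (∑ j, ⨅ x : Set.Icc (a j - α) (a j + α), u j * (x : ℝ)) ≤
          ∫ x, Real.exp ((inner ℝ u x : ℝ)) ∂μ := by
  -- `μ` is not concentrated at `0`
  have h : μ ({0}ᶜ : Set (EuclideanSpace ℝ (Fin d))) ≠ 0 := by
    intro h
    apply hμ
    have h1 : μ {0} = 1 := (prob_compl_eq_zero_iff (measurableSet_singleton 0)).1 h
    ext s hs
    rw [Measure.dirac_apply' _ hs]
    by_cases h0s : (0 : EuclideanSpace ℝ (Fin d)) ∈ s
    · rw [Set.indicator_of_mem h0s]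
      refine le_antisymm prob_le_one ?_
      calc (1:ENNReal) = μ {0} := h1.symm
        _ ≤ μ s := measure_mono (Set.singleton_subset_iff.2 h0s)
    · rw [Set.indicator_of_notMem h0s]
      have : s ⊆ ({0}ᶜ : Set (EuclideanSpace ℝ (Fin d))) := fun x hx => by
        simp only [Set.mem_compl_iff, Set.mem_singleton_iff]
        rintro rfl; exact h0s hx
      exact measure_mono_null this h
  -- find a coordinate `j₀`, a scale `n` and a sign `ε` carrying positive mass
  have key : ∃ (j₀ : Fin d) (n : ℕ) (ε : ℝ), (ε = 1 ∨ ε = -1) ∧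
      μ {x : EuclideanSpace ℝ (Fin d) |
          (1/(n+1 : ℝ) ≤ ε * x j₀ ∧ ∀ j, |x j| ≤ (n+1 : ℝ))} ≠ 0 := by
    have hcov : ({0}ᶜ : Set (EuclideanSpace ℝ (Fin d))) ⊆
        ⋃ j, {x : EuclideanSpace ℝ (Fin d) | x j ≠ 0} := by
      intro x hx
      simp only [Set.mem_compl_iff, Set.mem_singleton_iff] at hx
      by_contra hc
      simp only [Set.mem_iUnion, Set.mem_setOf_eq, not_exists, not_not] at hc
      exact hx (PiLp.ext hc)
    have hj : ∃ j₀, μ {x : EuclideanSpace ℝ (Fin d) | x j₀ ≠ 0} ≠ 0 := by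
      by_contra hc
      push_neg at hc
      exact h (measure_mono_null hcov (measure_iUnion_null hc))
    obtain ⟨j₀, hj₀⟩ := hj
    set A : ℕ → Set (EuclideanSpace ℝ (Fin d)) :=
      fun n => {x | 1/(n+1 : ℝ) ≤ |x j₀| ∧ ∀ j, |x j| ≤ (n+1 : ℝ)} with hA
    have hcov2 : {x : EuclideanSpace ℝ (Fin d) | x j₀ ≠ 0} ⊆ ⋃ n, A n := by
      intro x hx
      simp only [Set.mem_setOf_eq] at hx
      obtain ⟨n, hn⟩ := exists_nat_ge (max (1/|x j₀|) (∑ j, |x j|))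
      have habs : 0 < |x j₀| := abs_pos.2 hx
      refine Set.mem_iUnion.2 ⟨n, ?_, fun j => ?_⟩
      · have h1 : 1/|x j₀| ≤ n := le_trans (le_max_left _ _) hn
        rw [div_le_iff₀ habs] at h1
        rw [div_le_iff₀ (by positivity)]
        nlinarith
      · have h2 : |x j| ≤ ∑ i, |x i| :=
          Finset.single_le_sum (fun i _ => abs_nonneg (x i)) (Finset.mem_univ j)
        have := le_trans (le_max_right _ _) hn
        linarith
    have hn : ∃ n, μ (A n) ≠ 0 := by
      by_contra hc
      push_neg at hc
      exact hj₀ (measure_mono_null hcov2 (measure_iUnion_null hc))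
    obtain ⟨n, hn⟩ := hn
    set P : Set (EuclideanSpace ℝ (Fin d)) :=
      {x | 1/(n+1 : ℝ) ≤ 1 * x j₀ ∧ ∀ j, |x j| ≤ (n+1 : ℝ)} with hP
    set Q : Set (EuclideanSpace ℝ (Fin d)) :=
      {x | 1/(n+1 : ℝ) ≤ (-1) * x j₀ ∧ ∀ j, |x j| ≤ (n+1 : ℝ)} with hQ
    have hsplit : A n ⊆ P ∪ Q := by
      rintro x ⟨h1, h2⟩
      rcases abs_cases (x j₀) with ⟨he, _⟩ | ⟨he, _⟩
      · left; exact ⟨by rw [one_mul, ← he]; exact h1, h2⟩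
      · right; exact ⟨by rw [neg_one_mul, ← he]; exact h1, h2⟩
    by_cases hPc : μ P = 0
    · refine ⟨j₀, n, -1, Or.inr rfl, ?_⟩
      intro hQc
      exact hn (measure_mono_null hsplit (measure_union_null hPc hQc))
    · exact ⟨j₀, n, 1, Or.inl rfl, hPc⟩
  obtain ⟨j₀, n, ε, hε, hS⟩ := key
  set N : ℝ := (n + 1 : ℝ) with hN
  have hN1 : (1:ℝ) ≤ N := by simp [hN]
  have hNpos : (0:ℝ) < N := lt_of_lt_of_le one_pos hN1
  set a : Fin d → ℝ := fun j => if j = j₀ then ε * (N + 1/N) else 0 with ha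
  -- the set from `key` is contained in the box
  have hsub : {x : EuclideanSpace ℝ (Fin d) |
        (1/(n+1 : ℝ) ≤ ε * x j₀ ∧ ∀ j, |x j| ≤ (n+1 : ℝ))} ⊆
      {x : EuclideanSpace ℝ (Fin d) | ∀ j, x j ∈ Set.Icc (a j - N) (a j + N)} := by
    rintro x ⟨h1, h2⟩ j
    by_cases hj : j = j₀
    · subst hj
      have h3 : |x j| ≤ N := h2 j
      rw [abs_le] at h3
      simp only [ha, if_pos rfl, Set.mem_Icc]
      have hinv : (0:ℝ) < 1/N := by positivity
      rcases hε with rfl | rfl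
      · constructor <;> nlinarith [h1, h3.1, h3.2]
      · constructor <;> nlinarith [h1, h3.1, h3.2]
    · have h3 : |x j| ≤ N := h2 j
      rw [abs_le] at h3
      simp only [ha, if_neg hj, Set.mem_Icc]
      constructor <;> linarith [h3.1, h3.2]
  have hBne : μ {x : EuclideanSpace ℝ (Fin d) | ∀ j, x j ∈ Set.Icc (a j - N) (a j + N)} ≠ 0 := by
    intro h0
    exact hS (measure_mono_null hsub h0)
  obtain ⟨δ, hδpos, hδle, hδint⟩ := laplace_box_bound d μ hint a N hBne
  refine ⟨a, N, δ, hNpos, hδpos, ?_, hδle, hδint⟩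
  -- `0` is not in the box
  intro h0
  have h0j : (0 : EuclideanSpace ℝ (Fin d)) j₀ ∈ Set.Icc (a j₀ - N) (a j₀ + N) := h0 j₀
  have hz : (0 : EuclideanSpace ℝ (Fin d)) j₀ = 0 := rfl
  rw [hz] at h0j
  simp only [ha, if_pos rfl, Set.mem_Icc] at h0j
  have hinv : (0:ℝ) < 1/N := by positivity
  rcases hε with rfl | rfl
  · nlinarith [h0j.1, h0j.2]
  · nlinarith [h0j.1, h0j.2]
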